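/- Let (R, m) be a commutative noetherian local ring and let M be an artinian R-module. Then the set of attached primes of M equals the set of associated primes of its Matlis dual: Att_R(M) = Ass_R(D(M)). -/

import Mathlib

/-- `attachedPrimes R M` is the set of prime ideals `p` of `R` attached to the `R`-module `M`,
i.e. such that `p` is the annihilator of some quotient of `M`. -/
def attachedPrimes (R : Type*) [CommRing R] (M : Type*) [AddCommGroup M] [Module R M] :
    Set (Ideal R) :=
  {p | p.IsPrime ∧ ∃ U : Submodule R M, p = Module.annihilator R (M ⧸ U)}

/-- over a noetherian local ring, for an artinian module `M`,
`Att_R(M) = Ass_R(D(M))`, where `D(M) = Hom_R(M, E)` is the Matlis dual with respect to an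
injective hull `E` of `R/m`. -/
theorem stmt4 (R : Type) [CommRing R] [IsNoetherianRing R] [IsLocalRing R]
    (M : Type) [AddCommGroup M] [Module R M] [IsArtinian R M]
    -- `E` is an injective hull of the residue field `R ⧸ m`:
    (E : Type) [AddCommGroup E] [Module R E] (hE : Module.Injective R E)
    (f : (R ⧸ IsLocalRing.maximalIdeal R) →ₗ[R] E) (hf : Function.Injective f)
    (hess : ∀ U : Submodule R E, U ≠ ⊥ → U ⊓ LinearMap.range f ≠ ⊥) :
    attachedPrimes R M = associatedPrimes R (M →ₗ[R] E) := by
  ext p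
  constructor
  · rintro ⟨hp, U, hU⟩
    haveI := hp
    set N := M ⧸ U with hN
    -- membership in p is annihilation of N
    have hmem : ∀ r : R, r ∈ p ↔ ∀ n : N, r • n = 0 := by
      intro r
      rw [hU, Module.mem_annihilator]
    -- minimal element of { rN : r ∉ p }
    obtain ⟨N₀, ⟨r₀, hr₀, hNr₀⟩, hmin⟩ :=
      IsArtinian.set_has_minimal (R := R) (M := N)
        {Q | ∃ r, r ∉ p ∧ Q = LinearMap.range (LinearMap.lsmul R N r)}
        ⟨LinearMap.range (LinearMap.lsmul R N 1), 1, by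
          simpa using hp.ne_top ∘ (Ideal.eq_top_iff_one p).2, rfl⟩
    subst hNr₀
    -- key : for every r ∉ p, r₀ N = (r * r₀) N
    have key : ∀ r : R, r ∉ p →
        LinearMap.range (LinearMap.lsmul R N r₀) =
          LinearMap.range (LinearMap.lsmul R N (r * r₀)) := by
      intro r hr
      have hle : LinearMap.range (LinearMap.lsmul R N (r * r₀)) ≤
          LinearMap.range (LinearMap.lsmul R N r₀) := by
        rintro _ ⟨n, rfl⟩
        refine ⟨r • n, ?_⟩
        simp only [LinearMap.lsmul_apply]
        rw [mul_smul, smul_comm]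
      have hrr₀ : r * r₀ ∉ p := fun h => (hp.mem_or_mem h).elim hr hr₀
      have := hmin _ ⟨r * r₀, hrr₀, rfl⟩
      exact le_antisymm (by by_contra h; exact this (lt_of_le_of_ne hle (fun e => h e.ge))) hle
    -- a nonzero element x of r₀ N
    obtain ⟨n₀, hn₀⟩ : ∃ n : N, r₀ • n ≠ 0 := by
      by_contra h
      push_neg at h
      exact hr₀ ((hmem r₀).2 h)
    set x : N := r₀ • n₀ with hxdef
    have hx : x ≠ 0 := hn₀
    have hxmem : ∀ r : R, r ∉ p → ∃ z : N, r • z = x := by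
      intro r hr
      have : x ∈ LinearMap.range (LinearMap.lsmul R N (r * r₀)) := by
        rw [← key r hr]; exact ⟨n₀, rfl⟩
      obtain ⟨y, hy⟩ := this
      refine ⟨r₀ • y, ?_⟩
      simp only [LinearMap.lsmul_apply] at hy ⊢
      rw [← mul_smul]
      exact hy
    -- the cyclic module generated by x
    set g : R →ₗ[R] N := LinearMap.toSpanSingleton R N x with hg
    set I : Ideal R := LinearMap.ker g with hI
    have hI_ne_top : I ≠ ⊤ := by
      intro h
      have : (1 : R) ∈ I := h ▸ Submodule.mem_top
      have h1x : (1 : R) • x = 0 := this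
      rw [one_smul] at h1x
      exact hx h1x
    have hIm : I ≤ IsLocalRing.maximalIdeal R := IsLocalRing.le_maximalIdeal hI_ne_top
    set gbar : (R ⧸ I) →ₗ[R] N := Submodule.liftQ I g le_rfl with hgbar
    have hgbarinj : Function.Injective gbar := by
      rw [← LinearMap.ker_eq_bot]
      exact Submodule.ker_liftQ_eq_bot' I g rfl
    set q : (R ⧸ I) →ₗ[R] (R ⧸ IsLocalRing.maximalIdeal R) :=
      Submodule.mapQ I (IsLocalRing.maximalIdeal R) LinearMap.id hIm with hq
    set ψ : (R ⧸ I) →ₗ[R] E := f.comp q with hψ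
    have hψ1 : ψ (Submodule.Quotient.mk 1) ≠ 0 := by
      have h1 : (Submodule.Quotient.mk (1 : R) :
          R ⧸ IsLocalRing.maximalIdeal R) ≠ 0 := by
        rw [Ne, Submodule.Quotient.mk_eq_zero]
        exact fun h => (IsLocalRing.maximalIdeal.isMaximal R).ne_top
          ((Ideal.eq_top_iff_one _).2 h)
      intro h
      apply h1
      apply hf
      simpa [hψ, hq, Submodule.mapQ_apply] using h.trans (map_zero f).symm
    obtain ⟨φ, hφ⟩ := hE.out gbar hgbarinj ψ
    have hφx : φ x ≠ 0 := by
      have h2 : gbar (Submodule.Quotient.mk 1) = x := by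
        rw [hgbar, Submodule.liftQ_apply, hg, LinearMap.toSpanSingleton_apply, one_smul]
      rw [← h2, hφ]
      exact hψ1
    -- the element of D(M)
    refine isAssociatedPrime_iff.2 ⟨hp, φ.comp U.mkQ, ?_⟩
    ext r
    rw [Submodule.mem_colon_singleton, Submodule.mem_bot]
    constructor
    · intro hr
      ext m
      have : r • (U.mkQ m) = 0 := (hmem r).1 hr _
      simp only [LinearMap.smul_apply, LinearMap.comp_apply, LinearMap.zero_apply]
      rw [← map_smul, this, map_zero]
    · intro hr
      by_contra hrp
      obtain ⟨z, hz⟩ := hxmem r hrp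
      obtain ⟨m, rfl⟩ := Submodule.mkQ_surjective U z
      have : (r • (φ.comp U.mkQ)) m = 0 := by rw [hr]; rfl
      simp only [LinearMap.smul_apply, LinearMap.comp_apply] at this
      rw [← map_smul, hz] at this
      exact hφx this
  · intro hmemA
    obtain ⟨hp, Φ, hΦ⟩ := isAssociatedPrime_iff.1 hmemA
    refine ⟨hp, LinearMap.ker Φ, ?_⟩
    ext r
    rw [hΦ, Submodule.mem_colon_singleton, Submodule.mem_bot, Module.mem_annihilator]
    constructor
    · intro hr y
      obtain ⟨m, rfl⟩ := Submodule.mkQ_surjective (LinearMap.ker Φ) y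
      rw [← map_smul, Submodule.mkQ_apply, Submodule.Quotient.mk_eq_zero]
      have : (r • Φ) m = 0 := by rw [hr]; rfl
      simpa [LinearMap.mem_ker] using this
    · intro h
      ext m
      have := h (Submodule.mkQ _ m)
      rw [← map_smul, Submodule.mkQ_apply, Submodule.Quotient.mk_eq_zero,
        LinearMap.mem_ker] at this
      simpa using this
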